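/- For a simple graph G, the following are equivalent: (i) there is no injective graph homomorphism from G into a disjoint union of copies of the path P_3 (i.e., G is not isomorphic to a subgraph of a disjoint union of paths of length three); (ii) G contains a subgraph isomorphic to one of the following four graphs: the triangle C_3, the 4-cycle C_4, the path P_4 with four edges, or the claw Y. -/

import Mathlib

open SimpleGraph

/-- The disjoint union of `ι`-many copies of the path `P₃` (the path with 4 vertices
and 3 edges, given in Mathlib as `pathGraph 4`). -/
def unionP3 (ι : Type*) : SimpleGraph (ι × Fin 4) where
  Adj p q := p.1 = q.1 ∧ (pathGraph 4).Adj p.2 q.2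
  symm := by
    constructor
    rintro p q ⟨h1, h2⟩
    exact ⟨h1.symm, h2.symm⟩
  loopless := by
    constructor
    rintro p ⟨h1, h2⟩
    exact (pathGraph 4).irrefl h2

/-- The triangle `C₃`: the complete graph on three vertices. -/
def triangleC3 : SimpleGraph (Fin 3) := ⊤

/-- The 4-cycle `C₄` with vertices `0,1,2,3` and edges `0–1, 1–2, 2–3, 3–0`. -/
def cycleC4 : SimpleGraph (Fin 4) := SimpleGraph.fromRel (fun i j => j = i + 1)

/-- The claw `Y`: vertices `0,1,2,3` with edges `0–1, 1–2, 1–3`. -/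
def clawY : SimpleGraph (Fin 4) := SimpleGraph.fromRel (fun i _ => i = 1)

set_option linter.unusedSectionVars false

namespace Stmt0Aux

variable {V : Type*} {G : SimpleGraph V}

/- ### hom construction lemmas -/

lemma hom_triangle {a b c : V} (hab : G.Adj a b) (hbc : G.Adj b c) (hac : G.Adj a c) :
    ∃ ψ : triangleC3 →g G, Function.Injective ψ := by
  have h1 : a ≠ b := hab.ne
  have h2 : b ≠ c := hbc.ne
  have h3 : a ≠ c := hac.ne
  refine ⟨⟨![a, b, c], ?_⟩, ?_⟩
  · intro i j hij
    simp only [triangleC3, top_adj] at hij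
    fin_cases i <;> fin_cases j <;> simp_all <;>
      first | exact hab | exact hbc | exact hac
            | exact hab.symm | exact hbc.symm | exact hac.symm
  · intro i j hij
    have hij' : (![a, b, c] : Fin 3 → V) i = ![a, b, c] j := hij
    clear hij
    fin_cases i <;> fin_cases j <;> simp_all

lemma hom_C4 {a b c d : V} (hab : G.Adj a b) (hbc : G.Adj b c) (hcd : G.Adj c d)
    (hda : G.Adj d a) (hac : a ≠ c) (hbd : b ≠ d) :
    ∃ ψ : cycleC4 →g G, Function.Injective ψ := by
  have h1 : a ≠ b := hab.ne
  have h2 : b ≠ c := hbc.ne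
  have h3 : c ≠ d := hcd.ne
  have h4 : d ≠ a := hda.ne
  refine ⟨⟨![a, b, c, d], ?_⟩, ?_⟩
  · intro i j hij
    simp only [cycleC4, fromRel_adj] at hij
    fin_cases i <;> fin_cases j <;> simp_all <;>
      first | exact hab | exact hbc | exact hcd | exact hda
            | exact hab.symm | exact hbc.symm | exact hcd.symm | exact hda.symm
  · intro i j hij
    have hij' : (![a, b, c, d] : Fin 4 → V) i = ![a, b, c, d] j := hij
    clear hij
    fin_cases i <;> fin_cases j <;> simp_all

lemma hom_P4 {a b c d e : V} (hab : G.Adj a b) (hbc : G.Adj b c) (hcd : G.Adj c d)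
    (hde : G.Adj d e) (hac : a ≠ c) (had : a ≠ d) (hae : a ≠ e) (hbd : b ≠ d)
    (hbe : b ≠ e) (hce : c ≠ e) :
    ∃ ψ : pathGraph 5 →g G, Function.Injective ψ := by
  have h1 : a ≠ b := hab.ne
  have h2 : b ≠ c := hbc.ne
  have h3 : c ≠ d := hcd.ne
  have h4 : d ≠ e := hde.ne
  refine ⟨⟨![a, b, c, d, e], ?_⟩, ?_⟩
  · intro i j hij
    rw [pathGraph_adj] at hij
    fin_cases i <;> fin_cases j <;> simp_all <;>
      first | exact hab | exact hbc | exact hcd | exact hde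
            | exact hab.symm | exact hbc.symm | exact hcd.symm | exact hde.symm
  · intro i j hij
    have hij' : (![a, b, c, d, e] : Fin 5 → V) i = ![a, b, c, d, e] j := hij
    clear hij
    fin_cases i <;> fin_cases j <;> simp_all

lemma hom_claw {v a b c : V} (hva : G.Adj v a) (hvb : G.Adj v b) (hvc : G.Adj v c)
    (hab : a ≠ b) (hac : a ≠ c) (hbc : b ≠ c) :
    ∃ ψ : clawY →g G, Function.Injective ψ := by
  have h1 : v ≠ a := hva.ne
  have h2 : v ≠ b := hvb.ne
  have h3 : v ≠ c := hvc.ne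
  refine ⟨⟨![a, v, b, c], ?_⟩, ?_⟩
  · intro i j hij
    simp only [clawY, fromRel_adj] at hij
    fin_cases i <;> fin_cases j <;> simp_all <;>
      first | exact hva | exact hvb | exact hvc
            | exact hva.symm | exact hvb.symm | exact hvc.symm
  · intro i j hij
    have hij' : (![a, v, b, c] : Fin 4 → V) i = ![a, v, b, c] j := hij
    clear hij
    fin_cases i <;> fin_cases j <;> simp_all

/- ### structural lemmas -/



/-- `v` has at most one neighbour. -/
def IsEnd (G : SimpleGraph V) (v : V) : Prop := ∀ ⦃a b : V⦄, G.Adj v a → G.Adj v b → a = b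

/-- second layer from root r -/
def P2 (G : SimpleGraph V) (r v : V) : Prop := ∃ m, G.Adj r m ∧ G.Adj m v ∧ v ≠ r

/-- third layer from root r -/
def P3 (G : SimpleGraph V) (r v : V) : Prop :=
  ∃ m n, G.Adj r m ∧ G.Adj m n ∧ G.Adj n v ∧ n ≠ r ∧ v ≠ m ∧ v ≠ r

section Hyps

variable (htri : ∀ a b c : V, G.Adj a b → G.Adj b c → G.Adj a c → False)
variable (hdeg : ∀ v a b c : V, G.Adj v a → G.Adj v b → G.Adj v c →
    a ≠ b → a ≠ c → b ≠ c → False)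
variable (hC4 : ∀ a b c d : V, G.Adj a b → G.Adj b c → G.Adj c d → G.Adj d a →
    a ≠ c → b ≠ d → False)
variable (hP4 : ∀ a b c d e : V, G.Adj a b → G.Adj b c → G.Adj c d → G.Adj d e →
    a ≠ c → a ≠ d → a ≠ e → b ≠ d → b ≠ e → c ≠ e → False)

include htri hdeg hC4 hP4

/-- Every vertex is within reach of an end. -/
lemma exists_end (v : V) : ∃ e, IsEnd G e ∧ G.Reachable e v := by
  classical
  by_cases hv : IsEnd G v
  · exact ⟨v, hv, Reachable.refl v⟩
  · simp only [IsEnd, not_forall] at hv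
    obtain ⟨a, b, hva, hvb, hab⟩ := hv
    by_cases ha : IsEnd G a
    · exact ⟨a, ha, hva.symm.reachable⟩
    · simp only [IsEnd, not_forall] at ha
      obtain ⟨p, q, hap, haq, hpq⟩ := ha
      obtain ⟨a', haa', ha'v⟩ : ∃ a', G.Adj a a' ∧ a' ≠ v := by
        by_cases hpv : p = v
        · exact ⟨q, haq, by rintro rfl; exact hpq hpv⟩
        · exact ⟨p, hap, hpv⟩
      have ha'b : a' ≠ b := by
        rintro rfl
        exact htri v a a' hva haa' hvb
      refine ⟨a', ?_, haa'.symm.reachable.trans hva.symm.reachable⟩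
      intro y z hy hz
      by_contra hyz
      obtain ⟨y', hy', hy'a⟩ : ∃ y', G.Adj a' y' ∧ y' ≠ a := by
        by_cases hya : y = a
        · exact ⟨z, hz, by rintro rfl; exact hyz hya⟩
        · exact ⟨y, hy, hya⟩
      have hy'v : y' ≠ v := by
        intro h
        rw [h] at hy'
        exact htri v a a' hva haa' hy'.symm
      have hy'b : y' ≠ b := by
        intro h
        rw [h] at hy'
        exact hC4 b a' a v hy'.symm haa'.symm hva.symm hvb (Ne.symm hab) ha'v
      exact hP4 y' a' a v b hy'.symm haa'.symm hva.symm hvb hy'a hy'v hy'b ha'v ha'b hab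

variable {r : V} (hr : IsEnd G r)
include hr

/-- exclusion : layer 1 vs layer 2 -/
lemma not_P2_of_adj {v : V} (hv : G.Adj r v) : ¬ P2 G r v := by
  rintro ⟨m, hrm, hmv, -⟩
  have : m = v := hr hrm hv
  subst this
  exact G.irrefl hmv

/-- exclusion : layer 1 vs layer 3 -/
lemma not_P3_of_adj {v : V} (hv : G.Adj r v) : ¬ P3 G r v := by
  rintro ⟨m, n, hrm, hmn, hnv, hnr, hvm, hvr⟩
  exact hvm (hr hv hrm)

/-- exclusion : layer 2 vs layer 3 -/
lemma not_P3_of_P2 {v : V} (h2 : P2 G r v) : ¬ P3 G r v := by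
  rintro ⟨m', n, hrm', hm'n, hnv, hnr, hvm', hvr⟩
  obtain ⟨m, hrm, hmv, -⟩ := h2
  have hmm : m = m' := hr hrm hrm'
  subst hmm
  rcases eq_or_ne n v with rfl | hne
  · exact G.irrefl hnv
  · exact hdeg m r n v (hrm.symm) hm'n hmv (Ne.symm hnr)
      (Ne.symm hvr) hne

/-- uniqueness in layer 2 -/
lemma P2_unique {v w : V} (h2 : P2 G r v) (h2' : P2 G r w) : v = w := by
  obtain ⟨m, hrm, hmv, hvr⟩ := h2
  obtain ⟨m', hrm', hm'w, hwr⟩ := h2'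
  have hmm : m = m' := hr hrm hrm'
  subst hmm
  by_contra hvw
  exact hdeg m r v w hrm.symm hmv hm'w (Ne.symm hvr) (Ne.symm hwr) hvw

/-- uniqueness in layer 3 -/
lemma P3_unique {v w : V} (h3 : P3 G r v) (h3' : P3 G r w) : v = w := by
  obtain ⟨m, n, hrm, hmn, hnv, hnr, hvm, hvr⟩ := h3
  obtain ⟨m', n', hrm', hm'n', hn'w, hn'r, hwm', hwr⟩ := h3'
  have hmm : m = m' := hr hrm hrm'
  subst hmm
  have hnn : n = n' := by
    by_contra hne
    exact hdeg m r n n' hrm.symm hmn hm'n' (Ne.symm hnr) (Ne.symm hn'r) hne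
  subst hnn
  by_contra hvw
  exact hdeg n m v w hmn.symm hnv hn'w (Ne.symm hvm) (Ne.symm hwm') hvw

/-- step from layer 1 -/
lemma step1 {v w : V} (hv : G.Adj r v) (hvw : G.Adj v w) : w = r ∨ P2 G r w := by
  rcases eq_or_ne w r with rfl | hwr
  · exact Or.inl rfl
  · exact Or.inr ⟨v, hv, hvw, hwr⟩

/-- step from layer 2 -/
lemma step2 {v w : V} (h2 : P2 G r v) (hvw : G.Adj v w) :
    G.Adj r w ∨ P3 G r w := by
  obtain ⟨m, hrm, hmv, hvr⟩ := h2
  rcases eq_or_ne w m with rfl | hwm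
  · exact Or.inl hrm
  · rcases eq_or_ne w r with rfl | hwr
    · exact absurd ⟨m, hrm, hmv, hvr⟩ (not_P2_of_adj htri hdeg hC4 hP4 hr hvw.symm)
    · exact Or.inr ⟨m, v, hrm, hmv, hvw, hvr, hwm, hwr⟩

/-- step from layer 3 -/
lemma step3 {v w : V} (h3 : P3 G r v) (hvw : G.Adj v w) : P2 G r w := by
  obtain ⟨m, n, hrm, hmn, hnv, hnr, hvm, hvr⟩ := h3
  rcases eq_or_ne w n with h | hwn
  · rw [h]; exact ⟨m, hrm, hmn, hnr⟩
  rcases eq_or_ne w r with h | hwr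
  · exfalso; rw [h] at hvw
    exact hC4 r m n v hrm hmn hnv hvw (Ne.symm hnr) (Ne.symm hvm)
  rcases eq_or_ne w m with h | hwm
  · exfalso; rw [h] at hvw
    exact htri m n v hmn hnv hvw.symm
  · exact absurd (hP4 r m n v w hrm hmn hnv hvw (Ne.symm hnr) (Ne.symm hvr)
      (Ne.symm hwr) (Ne.symm hvm) (Ne.symm hwm) (Ne.symm hwn)) not_false

/-- full coverage of the component of an end -/
lemma cover {v : V} (hrv : G.Reachable r v) :
    v = r ∨ G.Adj r v ∨ P2 G r v ∨ P3 G r v := by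
  obtain ⟨p⟩ := hrv
  have key : ∀ (u w : V), G.Walk u w →
      (u = r ∨ G.Adj r u ∨ P2 G r u ∨ P3 G r u) →
      (w = r ∨ G.Adj r w ∨ P2 G r w ∨ P3 G r w) := by
    intro u w p
    induction p with
    | nil => exact id
    | @cons x y z hxy p ih =>
      intro hx
      apply ih
      rcases hx with rfl | h1 | h2 | h3
      · exact Or.inr (Or.inl hxy)
      · rcases step1 htri hdeg hC4 hP4 hr h1 hxy with rfl | h
        · exact Or.inl rfl
        · exact Or.inr (Or.inr (Or.inl h))
      · rcases step2 htri hdeg hC4 hP4 hr h2 hxy with h | h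
        · exact Or.inr (Or.inl h)
        · exact Or.inr (Or.inr (Or.inr h))
      · exact Or.inr (Or.inr (Or.inl (step3 htri hdeg hC4 hP4 hr h3 hxy)))
  exact key r v p (Or.inl rfl)

end Hyps


end Stmt0Aux

namespace Stmt0Aux
variable {V : Type*} {G : SimpleGraph V}

lemma unionP3_adj {ι : Type*} {p q : ι × Fin 4} :
    (unionP3 ι).Adj p q ↔ p.1 = q.1 ∧ (pathGraph 4).Adj p.2 q.2 := Iff.rfl

open Classical in
/-- position of a vertex relative to a root -/
noncomputable def pos (G : SimpleGraph V) (r v : V) : Fin 4 :=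
  if v = r then 0
  else if G.Adj r v then 1
  else if P2 G r v then 2
  else 3

lemma pos_eq_zero {r v : V} (h : v = r) : pos G r v = 0 := by
  simp [pos, h]

lemma pos_eq_one {r v : V} (h : G.Adj r v) : pos G r v = 1 := by
  simp [pos, h, h.ne']

section H2
variable (htri : ∀ a b c : V, G.Adj a b → G.Adj b c → G.Adj a c → False)
variable (hdeg : ∀ v a b c : V, G.Adj v a → G.Adj v b → G.Adj v c →
    a ≠ b → a ≠ c → b ≠ c → False)
variable (hC4 : ∀ a b c d : V, G.Adj a b → G.Adj b c → G.Adj c d → G.Adj d a →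
    a ≠ c → b ≠ d → False)
variable (hP4 : ∀ a b c d e : V, G.Adj a b → G.Adj b c → G.Adj c d → G.Adj d e →
    a ≠ c → a ≠ d → a ≠ e → b ≠ d → b ≠ e → c ≠ e → False)
variable {r : V} (hr : IsEnd G r)
include htri hdeg hC4 hP4 hr

lemma pos_eq_two {v : V} (h : P2 G r v) : pos G r v = 2 := by
  obtain ⟨m, -, -, hvr⟩ := id h
  have hna : ¬ G.Adj r v := fun ha => not_P2_of_adj htri hdeg hC4 hP4 hr ha h
  simp [pos, hvr, hna, h]

lemma pos_eq_three {v : V} (h : P3 G r v) : pos G r v = 3 := by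
  obtain ⟨m, n, -, -, -, -, -, hvr⟩ := id h
  have hna : ¬ G.Adj r v := fun ha => not_P3_of_adj htri hdeg hC4 hP4 hr ha h
  have hn2 : ¬ P2 G r v := fun h2 => not_P3_of_P2 htri hdeg hC4 hP4 hr h2 h
  simp [pos, hvr, hna, hn2]

end H2
end Stmt0Aux


/-- For a simple graph `G`, the following are equivalent: (i) there is no injective graph
homomorphism from `G` into a disjoint union of copies of the path `P₃`; (ii) `G` contains a
subgraph isomorphic to one of: the triangle `C₃`, the 4-cycle `C₄`, the path `P₄`
(with four edges, i.e. `pathGraph 5`), or the claw `Y`. -/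
theorem stmt0 {V : Type u} (G : SimpleGraph V) :
    (¬ ∃ (ι : Type u) (ψ : G →g unionP3 ι), Function.Injective ψ) ↔
      ((∃ ψ : triangleC3 →g G, Function.Injective ψ) ∨
       (∃ ψ : cycleC4 →g G, Function.Injective ψ) ∨
       (∃ ψ : pathGraph 5 →g G, Function.Injective ψ) ∨
       (∃ ψ : clawY →g G, Function.Injective ψ)) := by
  classical
  constructor
  · -- hard direction, by contrapositive
    intro hne
    by_contra hRHS
    push_neg at hRHS
    obtain ⟨hT, hC, hP, hY⟩ := hRHS
    apply hne
    have htri : ∀ a b c : V, G.Adj a b → G.Adj b c → G.Adj a c → False := by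
      intro a b c h1 h2 h3
      obtain ⟨ψ, hψ⟩ := Stmt0Aux.hom_triangle h1 h2 h3
      exact hT ψ hψ
    have hdeg : ∀ v a b c : V, G.Adj v a → G.Adj v b → G.Adj v c →
        a ≠ b → a ≠ c → b ≠ c → False := by
      intro v a b c h1 h2 h3 h4 h5 h6
      obtain ⟨ψ, hψ⟩ := Stmt0Aux.hom_claw h1 h2 h3 h4 h5 h6
      exact hY ψ hψ
    have hC4 : ∀ a b c d : V, G.Adj a b → G.Adj b c → G.Adj c d → G.Adj d a →
        a ≠ c → b ≠ d → False := by
      intro a b c d h1 h2 h3 h4 h5 h6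
      obtain ⟨ψ, hψ⟩ := Stmt0Aux.hom_C4 h1 h2 h3 h4 h5 h6
      exact hC ψ hψ
    have hP4 : ∀ a b c d e : V, G.Adj a b → G.Adj b c → G.Adj c d → G.Adj d e →
        a ≠ c → a ≠ d → a ≠ e → b ≠ d → b ≠ e → c ≠ e → False := by
      intro a b c d e h1 h2 h3 h4 h5 h6 h7 h8 h9 h10
      obtain ⟨ψ, hψ⟩ := Stmt0Aux.hom_P4 h1 h2 h3 h4 h5 h6 h7 h8 h9 h10
      exact hP ψ hψ
    have hroot : ∀ cc : G.ConnectedComponent,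
        ∃ e, Stmt0Aux.IsEnd G e ∧ G.connectedComponentMk e = cc := by
      refine ConnectedComponent.ind (fun v => ?_)
      obtain ⟨e, he, hre⟩ := Stmt0Aux.exists_end htri hdeg hC4 hP4 v
      exact ⟨e, he, ConnectedComponent.sound hre⟩
    choose root hend hmk using hroot
    have hreach : ∀ v : V, G.Reachable (root (G.connectedComponentMk v)) v :=
      fun v => ConnectedComponent.exact (hmk _)
    have cov : ∀ v : V, v = root (G.connectedComponentMk v) ∨
        G.Adj (root (G.connectedComponentMk v)) v ∨
        Stmt0Aux.P2 G (root (G.connectedComponentMk v)) v ∨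
        Stmt0Aux.P3 G (root (G.connectedComponentMk v)) v :=
      fun v => Stmt0Aux.cover htri hdeg hC4 hP4 (hend _) (hreach v)
    refine ⟨G.ConnectedComponent,
      ⟨fun v => (G.connectedComponentMk v, Stmt0Aux.pos G (root (G.connectedComponentMk v)) v), ?_⟩, ?_⟩
    · -- graph homomorphism
      intro a b hab
      have hcc : G.connectedComponentMk a = G.connectedComponentMk b :=
        ConnectedComponent.sound hab.reachable
      have hRab : root (G.connectedComponentMk a) = root (G.connectedComponentMk b) := by
        rw [hcc]
      refine Stmt0Aux.unionP3_adj.mpr ⟨hcc, ?_⟩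
      show (pathGraph 4).Adj (Stmt0Aux.pos G (root (G.connectedComponentMk a)) a)
        (Stmt0Aux.pos G (root (G.connectedComponentMk b)) b)
      rcases cov a with h | h | h | h
      · have hb : G.Adj (root (G.connectedComponentMk b)) b := by
          rw [← hRab, ← h]; exact hab
        rw [Stmt0Aux.pos_eq_zero h, Stmt0Aux.pos_eq_one hb]
        exact pathGraph_adj.mpr (by decide)
      · rcases Stmt0Aux.step1 htri hdeg hC4 hP4 (hend _) h hab with hb | hb
        · rw [Stmt0Aux.pos_eq_one h, Stmt0Aux.pos_eq_zero (by rw [← hRab]; exact hb)]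
          exact pathGraph_adj.mpr (by decide)
        · rw [Stmt0Aux.pos_eq_one h,
            Stmt0Aux.pos_eq_two htri hdeg hC4 hP4 (hend _) (by rw [← hRab]; exact hb)]
          exact pathGraph_adj.mpr (by decide)
      · rcases Stmt0Aux.step2 htri hdeg hC4 hP4 (hend _) h hab with hb | hb
        · rw [Stmt0Aux.pos_eq_two htri hdeg hC4 hP4 (hend _) h,
            Stmt0Aux.pos_eq_one (by rw [← hRab]; exact hb)]
          exact pathGraph_adj.mpr (by decide)
        · rw [Stmt0Aux.pos_eq_two htri hdeg hC4 hP4 (hend _) h,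
            Stmt0Aux.pos_eq_three htri hdeg hC4 hP4 (hend _) (by rw [← hRab]; exact hb)]
          exact pathGraph_adj.mpr (by decide)
      · have hb := Stmt0Aux.step3 htri hdeg hC4 hP4 (hend _) h hab
        rw [Stmt0Aux.pos_eq_three htri hdeg hC4 hP4 (hend _) h,
          Stmt0Aux.pos_eq_two htri hdeg hC4 hP4 (hend _) (by rw [← hRab]; exact hb)]
        exact pathGraph_adj.mpr (by decide)
    · -- injectivity
      intro a b hab
      have hab' : (G.connectedComponentMk a, Stmt0Aux.pos G (root (G.connectedComponentMk a)) a)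
          = (G.connectedComponentMk b, Stmt0Aux.pos G (root (G.connectedComponentMk b)) b) := hab
      rw [Prod.mk.injEq] at hab'
      obtain ⟨h1, h2⟩ := hab'
      have hRab : root (G.connectedComponentMk a) = root (G.connectedComponentMk b) := by
        rw [h1]
      rcases cov a with ha | ha | ha | ha <;> rcases cov b with hb | hb | hb | hb
      · rw [ha, hb, hRab]
      · rw [Stmt0Aux.pos_eq_zero ha, Stmt0Aux.pos_eq_one hb] at h2
        exact absurd h2 (by decide)
      · rw [Stmt0Aux.pos_eq_zero ha,
          Stmt0Aux.pos_eq_two htri hdeg hC4 hP4 (hend _) hb] at h2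
        exact absurd h2 (by decide)
      · rw [Stmt0Aux.pos_eq_zero ha,
          Stmt0Aux.pos_eq_three htri hdeg hC4 hP4 (hend _) hb] at h2
        exact absurd h2 (by decide)
      · rw [Stmt0Aux.pos_eq_one ha, Stmt0Aux.pos_eq_zero hb] at h2
        exact absurd h2 (by decide)
      · exact (hend _) ha (by rw [hRab]; exact hb)
      · rw [Stmt0Aux.pos_eq_one ha,
          Stmt0Aux.pos_eq_two htri hdeg hC4 hP4 (hend _) hb] at h2
        exact absurd h2 (by decide)
      · rw [Stmt0Aux.pos_eq_one ha,
          Stmt0Aux.pos_eq_three htri hdeg hC4 hP4 (hend _) hb] at h2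
        exact absurd h2 (by decide)
      · rw [Stmt0Aux.pos_eq_two htri hdeg hC4 hP4 (hend _) ha,
          Stmt0Aux.pos_eq_zero hb] at h2
        exact absurd h2 (by decide)
      · rw [Stmt0Aux.pos_eq_two htri hdeg hC4 hP4 (hend _) ha,
          Stmt0Aux.pos_eq_one hb] at h2
        exact absurd h2 (by decide)
      · exact Stmt0Aux.P2_unique htri hdeg hC4 hP4 (hend _) ha (by rw [hRab]; exact hb)
      · rw [Stmt0Aux.pos_eq_two htri hdeg hC4 hP4 (hend _) ha,
          Stmt0Aux.pos_eq_three htri hdeg hC4 hP4 (hend _) hb] at h2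
        exact absurd h2 (by decide)
      · rw [Stmt0Aux.pos_eq_three htri hdeg hC4 hP4 (hend _) ha,
          Stmt0Aux.pos_eq_zero hb] at h2
        exact absurd h2 (by decide)
      · rw [Stmt0Aux.pos_eq_three htri hdeg hC4 hP4 (hend _) ha,
          Stmt0Aux.pos_eq_one hb] at h2
        exact absurd h2 (by decide)
      · rw [Stmt0Aux.pos_eq_three htri hdeg hC4 hP4 (hend _) ha,
          Stmt0Aux.pos_eq_two htri hdeg hC4 hP4 (hend _) hb] at h2
        exact absurd h2 (by decide)
      · exact Stmt0Aux.P3_unique htri hdeg hC4 hP4 (hend _) ha (by rw [hRab]; exact hb)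
  · -- easy direction
    rintro hRHS ⟨ι, φ, hφ⟩
    rcases hRHS with ⟨ψ, hψ⟩ | ⟨ψ, hψ⟩ | ⟨ψ, hψ⟩ | ⟨ψ, hψ⟩
    · -- triangle
      have hχ : Function.Injective (φ ∘ ψ) := hφ.comp hψ
      have e01 := Stmt0Aux.unionP3_adj.mp
        (φ.map_rel (ψ.map_rel (show triangleC3.Adj 0 1 by simp [triangleC3])))
      have e12 := Stmt0Aux.unionP3_adj.mp
        (φ.map_rel (ψ.map_rel (show triangleC3.Adj 1 2 by simp [triangleC3])))
      have e02 := Stmt0Aux.unionP3_adj.mp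
        (φ.map_rel (ψ.map_rel (show triangleC3.Adj 0 2 by simp [triangleC3])))
      have a01 := pathGraph_adj.mp e01.2
      have a12 := pathGraph_adj.mp e12.2
      have a02 := pathGraph_adj.mp e02.2
      omega
    · -- C4
      have hχ : Function.Injective (φ ∘ ψ) := hφ.comp hψ
      have e01 := Stmt0Aux.unionP3_adj.mp (φ.map_rel (ψ.map_rel
        (show cycleC4.Adj 0 1 by simp only [cycleC4, fromRel_adj]; decide)))
      have e12 := Stmt0Aux.unionP3_adj.mp (φ.map_rel (ψ.map_rel
        (show cycleC4.Adj 1 2 by simp only [cycleC4, fromRel_adj]; decide)))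
      have e23 := Stmt0Aux.unionP3_adj.mp (φ.map_rel (ψ.map_rel
        (show cycleC4.Adj 2 3 by simp only [cycleC4, fromRel_adj]; decide)))
      have e30 := Stmt0Aux.unionP3_adj.mp (φ.map_rel (ψ.map_rel
        (show cycleC4.Adj 3 0 by simp only [cycleC4, fromRel_adj]; decide)))
      have a01 := pathGraph_adj.mp e01.2
      have a12 := pathGraph_adj.mp e12.2
      have a23 := pathGraph_adj.mp e23.2
      have a30 := pathGraph_adj.mp e30.2
      have h02 : (φ (ψ 0)).2.val ≠ (φ (ψ 2)).2.val := by
        intro h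
        have : φ (ψ 0) = φ (ψ 2) := Prod.ext (e01.1.trans e12.1) (Fin.val_injective h)
        exact absurd (hχ this) (by decide)
      have h13 : (φ (ψ 1)).2.val ≠ (φ (ψ 3)).2.val := by
        intro h
        have : φ (ψ 1) = φ (ψ 3) := Prod.ext (e12.1.trans e23.1) (Fin.val_injective h)
        exact absurd (hχ this) (by decide)
      omega
    · -- P4
      have hχ : Function.Injective (φ ∘ ψ) := hφ.comp hψ
      have e01 := Stmt0Aux.unionP3_adj.mp (φ.map_rel (ψ.map_rel
        (show (pathGraph 5).Adj 0 1 from pathGraph_adj.mpr (by decide))))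
      have e12 := Stmt0Aux.unionP3_adj.mp (φ.map_rel (ψ.map_rel
        (show (pathGraph 5).Adj 1 2 from pathGraph_adj.mpr (by decide))))
      have e23 := Stmt0Aux.unionP3_adj.mp (φ.map_rel (ψ.map_rel
        (show (pathGraph 5).Adj 2 3 from pathGraph_adj.mpr (by decide))))
      have e34 := Stmt0Aux.unionP3_adj.mp (φ.map_rel (ψ.map_rel
        (show (pathGraph 5).Adj 3 4 from pathGraph_adj.mpr (by decide))))
      have hfst : ∀ i : Fin 5, (φ (ψ i)).1 = (φ (ψ 0)).1 := by
        intro i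
        fin_cases i
        · rfl
        · exact e01.1.symm
        · exact (e01.1.trans e12.1).symm
        · exact ((e01.1.trans e12.1).trans e23.1).symm
        · exact (((e01.1.trans e12.1).trans e23.1).trans e34.1).symm
      have hg : Function.Injective (fun i : Fin 5 => (φ (ψ i)).2) := by
        intro i j h
        exact hχ (Prod.ext ((hfst i).trans (hfst j).symm) h)
      have := Fintype.card_le_of_injective _ hg
      simp [Fintype.card_fin] at this
    · -- claw
      have hχ : Function.Injective (φ ∘ ψ) := hφ.comp hψ
      have e10 := Stmt0Aux.unionP3_adj.mp (φ.map_rel (ψ.map_rel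
        (show clawY.Adj 1 0 by simp only [clawY, fromRel_adj]; decide)))
      have e12 := Stmt0Aux.unionP3_adj.mp (φ.map_rel (ψ.map_rel
        (show clawY.Adj 1 2 by simp only [clawY, fromRel_adj]; decide)))
      have e13 := Stmt0Aux.unionP3_adj.mp (φ.map_rel (ψ.map_rel
        (show clawY.Adj 1 3 by simp only [clawY, fromRel_adj]; decide)))
      have a10 := pathGraph_adj.mp e10.2
      have a12 := pathGraph_adj.mp e12.2
      have a13 := pathGraph_adj.mp e13.2
      have h02 : (φ (ψ 0)).2.val ≠ (φ (ψ 2)).2.val := by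
        intro h
        have : φ (ψ 0) = φ (ψ 2) := Prod.ext (e10.1.symm.trans e12.1) (Fin.val_injective h)
        exact absurd (hχ this) (by decide)
      have h03 : (φ (ψ 0)).2.val ≠ (φ (ψ 3)).2.val := by
        intro h
        have : φ (ψ 0) = φ (ψ 3) := Prod.ext (e10.1.symm.trans e13.1) (Fin.val_injective h)
        exact absurd (hχ this) (by decide)
      have h23 : (φ (ψ 2)).2.val ≠ (φ (ψ 3)).2.val := by
        intro h
        have : φ (ψ 2) = φ (ψ 3) := Prod.ext (e12.1.symm.trans e13.1) (Fin.val_injective h)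
        exact absurd (hχ this) (by decide)
      omega
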